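/- Substitution lemma for system U: if Φ_t is a derivation of Γ; x:[σ_i]_{i∈I} ⊢ t : τ and for each i ∈ I, Φ^i_u is a derivation of Δ_i ⊢ u : σ_i, all in system U, then there is a derivation Φ of Γ +_{i∈I} Δ_i ⊢ t{x:=u} : τ in system U with |Φ| = |Φ_t| + Σ_{i∈I}|Φ^i_u| − |I|. -/

import Mathlib

/-! # The Bang Calculus Revisited: common definitions.

Terms are represented with de Bruijn indices, so that all the meta-level
substitutions are capture-avoiding by construction. -/

/-- Terms of the λ!-calculus.  `esub t u` is the explicit substitution
`t[0\u]`: the (anonymous) binder scopes over `t`, not over `u`. -/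
inductive Tm : Type
  | var : ℕ → Tm
  | app : Tm → Tm → Tm
  | lam : Tm → Tm
  | bang : Tm → Tm
  | der : Tm → Tm
  | esub : Tm → Tm → Tm
  deriving DecidableEq

namespace Tm

/-- lifting a renaming under a binder -/
def liftR (f : ℕ → ℕ) : ℕ → ℕ
  | 0 => 0
  | k + 1 => f k + 1

/-- renaming of free variables -/
def rename (f : ℕ → ℕ) : Tm → Tm
  | var k => var (f k)
  | app t u => app (rename f t) (rename f u)
  | lam t => lam (rename (liftR f) t)
  | bang t => bang (rename f t)
  | der t => der (rename f t)
  | esub t u => esub (rename (liftR f) t) (rename f u)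

/-- lifting a simultaneous substitution under a binder -/
def liftS (σ : ℕ → Tm) : ℕ → Tm
  | 0 => var 0
  | k + 1 => rename (· + 1) (σ k)

/-- simultaneous (capture-avoiding) substitution -/
def subst (σ : ℕ → Tm) : Tm → Tm
  | var k => σ k
  | app t u => app (subst σ t) (subst σ u)
  | lam t => lam (subst (liftS σ) t)
  | bang t => bang (subst σ t)
  | der t => der (subst σ t)
  | esub t u => esub (subst (liftS σ) t) (subst σ u)

/-- capture-avoiding substitution of `u` for the variable `0` of `t`,
where the result is placed under `n` extra binders (and `u` already lives
at that depth). -/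
def substIn (n : ℕ) (u : Tm) (t : Tm) : Tm :=
  subst (fun k => match k with
    | 0 => u
    | k + 1 => var (k + n)) t

/-- capture-avoiding meta-level substitution `t{0 := u}` -/
def subst0 (u : Tm) (t : Tm) : Tm := substIn 0 u t

/-- plugging a term into a list context `L ::= ◻ | L[x\t]`; the head of the
list is the argument of the outermost explicit substitution. -/
def plug : List Tm → Tm → Tm
  | [], s => s
  | e :: L, s => esub (plug L s) e

/-- the w-size of a term -/
def wsize : Tm → ℕ
  | var _ => 0
  | app t u => 1 + wsize t + wsize u
  | lam t => 1 + wsize t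
  | bang _ => 0
  | der t => 1 + wsize t
  | esub t u => 1 + wsize t + wsize u

end Tm

/-- the names of the three rewriting rules of the λ!-calculus -/
inductive Rule : Type
  | dB | sb | db
  deriving DecidableEq

open Tm in
/-- the three rewriting rules, applied at the root (at a distance) -/
inductive Root : Rule → Tm → Tm → Prop
  | dB (L : List Tm) (t u : Tm) :
      Root .dB (app (plug L (lam t)) u)
               (plug L (esub t (rename (· + L.length) u)))
  | sb (L : List Tm) (t u : Tm) :
      Root .sb (esub t (plug L (bang u))) (plug L (substIn L.length u t))
  | db (L : List Tm) (t : Tm) :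
      Root .db (der (plug L (bang t))) (plug L t)

/-- closure of each rule under weak contexts (no reduction under `bang`) -/
inductive Step : Rule → Tm → Tm → Prop
  | root {r : Rule} {t t' : Tm} : Root r t t' → Step r t t'
  | appL {r t t'} (u : Tm) : Step r t t' → Step r (Tm.app t u) (Tm.app t' u)
  | appR {r u u'} (t : Tm) : Step r u u' → Step r (Tm.app t u) (Tm.app t u')
  | lam {r t t'} : Step r t t' → Step r (Tm.lam t) (Tm.lam t')
  | der {r t t'} : Step r t t' → Step r (Tm.der t) (Tm.der t')
  | esubL {r t t'} (u : Tm) : Step r t t' → Step r (Tm.esub t u) (Tm.esub t' u)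
  | esubR {r u u'} (t : Tm) : Step r u u' → Step r (Tm.esub t u) (Tm.esub t u')

/-- the weak reduction `→w` of the λ!-calculus -/
def StepW (t t' : Tm) : Prop := ∃ r, Step r t t'

/-- counted weak reduction: `RedCnt t (b, e) u` holds iff `t →w* u` using `b`
dB-steps and `e` steps of kind s!/d!. -/
inductive RedCnt : Tm → ℕ × ℕ → Tm → Prop
  | refl (t : Tm) : RedCnt t (0, 0) t
  | db {t t₁ u : Tm} {b e : ℕ} :
      Step .dB t t₁ → RedCnt t₁ (b, e) u → RedCnt t (b + 1, e) u
  | ex {t t₁ u : Tm} {b e : ℕ} :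
      (Step .sb t t₁ ∨ Step .db t t₁) → RedCnt t₁ (b, e) u →
      RedCnt t (b, e + 1) u

mutual
  /-- neutral w-normal terms -/
  inductive NeW : Tm → Prop
    | var (k : ℕ) : NeW (Tm.var k)
    | app {t u : Tm} : NaW t → NoW u → NeW (Tm.app t u)
    | der {t : Tm} : NbW t → NeW (Tm.der t)
    | esub {t u : Tm} : NeW t → NbW u → NeW (Tm.esub t u)
  /-- neutral-abs w-normal terms -/
  inductive NaW : Tm → Prop
    | bang (t : Tm) : NaW (Tm.bang t)
    | ne {t : Tm} : NeW t → NaW t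
    | esub {t u : Tm} : NaW t → NbW u → NaW (Tm.esub t u)
  /-- neutral-bang w-normal terms -/
  inductive NbW : Tm → Prop
    | ne {t : Tm} : NeW t → NbW t
    | lam {t : Tm} : NoW t → NbW (Tm.lam t)
    | esub {t u : Tm} : NbW t → NbW u → NbW (Tm.esub t u)
  /-- w-normal terms -/
  inductive NoW : Tm → Prop
    | na {t : Tm} : NaW t → NoW t
    | nb {t : Tm} : NbW t → NoW t
end

/-- clashes -/
inductive Clash : Tm → Prop
  | appBang (L : List Tm) (t u : Tm) : Clash (Tm.app (Tm.plug L (Tm.bang t)) u)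
  | esubLam (L : List Tm) (t u : Tm) : Clash (Tm.esub t (Tm.plug L (Tm.lam u)))
  | derLam (L : List Tm) (u : Tm) : Clash (Tm.der (Tm.plug L (Tm.lam u)))
  | appLam (L : List Tm) (t u : Tm) : Clash (Tm.app t (Tm.plug L (Tm.lam u)))

/-- `WSub t s` holds iff `t = W⟨s⟩` for some weak context `W` -/
inductive WSub : Tm → Tm → Prop
  | refl (t : Tm) : WSub t t
  | appL {t s : Tm} (u : Tm) : WSub t s → WSub (Tm.app t u) s
  | appR {u s : Tm} (t : Tm) : WSub u s → WSub (Tm.app t u) s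
  | lam {t s : Tm} : WSub t s → WSub (Tm.lam t) s
  | der {t s : Tm} : WSub t s → WSub (Tm.der t) s
  | esubL {t s : Tm} (u : Tm) : WSub t s → WSub (Tm.esub t u) s
  | esubR {u s : Tm} (t : Tm) : WSub u s → WSub (Tm.esub t u) s

/-- weak clash freeness -/
def Wcf (t : Tm) : Prop := ¬ ∃ s, WSub t s ∧ Clash s

mutual
  /-- neutral weak clash free normal terms -/
  inductive NeCF : Tm → Prop
    | var (k : ℕ) : NeCF (Tm.var k)
    | app {t u : Tm} : NeCF t → NaCF u → NeCF (Tm.app t u)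
    | der {t : Tm} : NeCF t → NeCF (Tm.der t)
    | esub {t u : Tm} : NeCF t → NeCF u → NeCF (Tm.esub t u)
  /-- neutral-abs weak clash free normal terms -/
  inductive NaCF : Tm → Prop
    | bang (t : Tm) : NaCF (Tm.bang t)
    | ne {t : Tm} : NeCF t → NaCF t
    | esub {t u : Tm} : NaCF t → NeCF u → NaCF (Tm.esub t u)
  /-- neutral-bang weak clash free normal terms -/
  inductive NbCF : Tm → Prop
    | ne {t : Tm} : NeCF t → NbCF t
    | lam {t : Tm} : NoCF t → NbCF (Tm.lam t)
    | esub {t u : Tm} : NbCF t → NeCF u → NbCF (Tm.esub t u)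
  /-- weak clash free normal terms -/
  inductive NoCF : Tm → Prop
    | na {t : Tm} : NaCF t → NoCF t
    | nb {t : Tm} : NbCF t → NoCF t
end

/-- Types of system 𝒰: base types, multiset types and arrow types.  A
multiset type is given by a list of types (a representative of the multiset
it determines). -/
inductive Ty : Type
  | base : ℕ → Ty
  | mult : List Ty → Ty
  | arr : List Ty → Ty → Ty

/-- typing contexts: functions from (de Bruijn) variables to multiset types -/
abbrev Ctx := ℕ → Multiset Ty

/-- the context mapping `k` to `M` and anything else to the empty multiset -/
def Ctx.single (k : ℕ) (M : Multiset Ty) : Ctx := fun j => if j = k then M else 0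

/-- removing the (type of the) bound variable `0` from a context -/
def Ctx.tail (Γ : Ctx) : Ctx := fun k => Γ (k + 1)

/-- extending a context with a multiset type for a fresh variable `0` -/
def Ctx.cons (M : Multiset Ty) (Γ : Ctx) : Ctx := fun k =>
  match k with
  | 0 => M
  | k + 1 => Γ k

/-- Sized typing of system 𝒰: `DerU Γ t τ n` means that there is a derivation
of `Γ ⊢ t : τ` whose size (number of rules, not counting `bg`) is `n`. -/
inductive DerU : Ctx → Tm → Ty → ℕ → Prop
  | ax (k : ℕ) (σ : Ty) : DerU (Ctx.single k {σ}) (Tm.var k) σ 1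
  | app {Γ Δ : Ctx} {t u : Tm} {M : List Ty} {τ : Ty} {n m : ℕ} :
      DerU Γ t (Ty.arr M τ) n → DerU Δ u (Ty.mult M) m →
      DerU (Γ + Δ) (Tm.app t u) τ (n + m + 1)
  | abs {Γ : Ctx} {t : Tm} {τ : Ty} {n : ℕ} (M : List Ty) :
      DerU Γ t τ n → Multiset.ofList M = Γ 0 →
      DerU (Ctx.tail Γ) (Tm.lam t) (Ty.arr M τ) (n + 1)
  | es {Γ Δ : Ctx} {t u : Tm} {σ : Ty} {M : List Ty} {n m : ℕ} :
      DerU Γ t σ n → DerU Δ u (Ty.mult M) m → Multiset.ofList M = Γ 0 →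
      DerU (Ctx.tail Γ + Δ) (Tm.esub t u) σ (n + m + 1)
  | bg {t : Tm} (prs : List (Ctx × Ty × ℕ)) :
      (∀ p ∈ prs, DerU p.1 t p.2.1 p.2.2) →
      DerU ((prs.map (·.1)).sum) (Tm.bang t)
           (Ty.mult (prs.map (·.2.1))) ((prs.map (·.2.2)).sum)
  | dr {Γ : Ctx} {t : Tm} {σ : Ty} {n : ℕ} :
      DerU Γ t (Ty.mult [σ]) n → DerU Γ (Tm.der t) σ (n + 1)

/-! ## The source λ-calculus with explicit substitutions (CBN / CBV) -/

/-- terms of the λ-calculus with explicit substitutions (de Bruijn) -/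
inductive Lm : Type
  | var : ℕ → Lm
  | app : Lm → Lm → Lm
  | lam : Lm → Lm
  | esub : Lm → Lm → Lm
  deriving DecidableEq

namespace Lm

def liftR (f : ℕ → ℕ) : ℕ → ℕ
  | 0 => 0
  | k + 1 => f k + 1

def rename (f : ℕ → ℕ) : Lm → Lm
  | var k => var (f k)
  | app t u => app (rename f t) (rename f u)
  | lam t => lam (rename (liftR f) t)
  | esub t u => esub (rename (liftR f) t) (rename f u)

def liftS (σ : ℕ → Lm) : ℕ → Lm
  | 0 => var 0
  | k + 1 => rename (· + 1) (σ k)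

def subst (σ : ℕ → Lm) : Lm → Lm
  | var k => σ k
  | app t u => app (subst σ t) (subst σ u)
  | lam t => lam (subst (liftS σ) t)
  | esub t u => esub (subst (liftS σ) t) (subst σ u)

def substIn (n : ℕ) (u : Lm) (t : Lm) : Lm :=
  subst (fun k => match k with
    | 0 => u
    | k + 1 => var (k + n)) t

/-- capture-avoiding meta-level substitution `t{0 := u}` -/
def subst0 (u : Lm) (t : Lm) : Lm := substIn 0 u t

def plug : List Lm → Lm → Lm
  | [], s => s
  | e :: L, s => esub (plug L s) e

/-- values -/
def IsVal : Lm → Prop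
  | var _ => True
  | lam _ => True
  | _ => False

/-- the n-size of a term -/
def nsize : Lm → ℕ
  | var _ => 0
  | lam t => 1 + nsize t
  | app t _ => 1 + nsize t
  | esub t _ => 1 + nsize t

/-- the v-size of a term -/
def vsize : Lm → ℕ
  | var _ => 0
  | lam _ => 0
  | app t u => 1 + vsize t + vsize u
  | esub t u => 1 + vsize t + vsize u

end Lm

/-- names of the CBN rules -/
inductive NRule : Type
  | dB | s
  deriving DecidableEq

/-- call-by-name reduction (closure of dB and s under CBN contexts) -/
inductive StepN : NRule → Lm → Lm → Prop
  | dB (L : List Lm) (t u : Lm) :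
      StepN .dB (Lm.app (Lm.plug L (Lm.lam t)) u)
                (Lm.plug L (Lm.esub t (Lm.rename (· + L.length) u)))
  | s (t u : Lm) : StepN .s (Lm.esub t u) (Lm.subst0 u t)
  | appL {r t t'} (u : Lm) : StepN r t t' → StepN r (Lm.app t u) (Lm.app t' u)
  | lam {r t t'} : StepN r t t' → StepN r (Lm.lam t) (Lm.lam t')
  | esubL {r t t'} (u : Lm) : StepN r t t' → StepN r (Lm.esub t u) (Lm.esub t' u)

/-- names of the CBV rules -/
inductive VRule : Type
  | dB | sv
  deriving DecidableEq

/-- call-by-value reduction (closure of dB and sv under CBV contexts) -/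
inductive StepV : VRule → Lm → Lm → Prop
  | dB (L : List Lm) (t u : Lm) :
      StepV .dB (Lm.app (Lm.plug L (Lm.lam t)) u)
                (Lm.plug L (Lm.esub t (Lm.rename (· + L.length) u)))
  | sv (L : List Lm) (t v : Lm) (hv : Lm.IsVal v) :
      StepV .sv (Lm.esub t (Lm.plug L v)) (Lm.plug L (Lm.substIn L.length v t))
  | appL {r t t'} (u : Lm) : StepV r t t' → StepV r (Lm.app t u) (Lm.app t' u)
  | appR {r u u'} (t : Lm) : StepV r u u' → StepV r (Lm.app t u) (Lm.app t u')
  | esubL {r t t'} (u : Lm) : StepV r t t' → StepV r (Lm.esub t u) (Lm.esub t' u)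
  | esubR {r u u'} (t : Lm) : StepV r u u' → StepV r (Lm.esub t u) (Lm.esub t u')

mutual
  /-- CBN neutral terms -/
  inductive NeN : Lm → Prop
    | var (k : ℕ) : NeN (Lm.var k)
    | app {t : Lm} (u : Lm) : NeN t → NeN (Lm.app t u)
  /-- CBN normal terms -/
  inductive NoN : Lm → Prop
    | lam {t : Lm} : NoN t → NoN (Lm.lam t)
    | ne {t : Lm} : NeN t → NoN t
end

mutual
  /-- CBV (substituted) variables -/
  inductive VrV : Lm → Prop
    | var (k : ℕ) : VrV (Lm.var k)
    | esub {t u : Lm} : VrV t → NeV u → VrV (Lm.esub t u)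
  /-- CBV neutral terms -/
  inductive NeV : Lm → Prop
    | app₁ {t u : Lm} : VrV t → NoV u → NeV (Lm.app t u)
    | app₂ {t u : Lm} : NeV t → NoV u → NeV (Lm.app t u)
    | esub {t u : Lm} : NeV t → NeV u → NeV (Lm.esub t u)
  /-- CBV normal terms -/
  inductive NoV : Lm → Prop
    | lam (t : Lm) : NoV (Lm.lam t)
    | vr {t : Lm} : VrV t → NoV t
    | ne {t : Lm} : NeV t → NoV t
    | esub {t u : Lm} : NoV t → NeV u → NoV (Lm.esub t u)
end

/-- counted CBN reduction, recording the number of dB- and s-steps -/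
inductive RedCntN : Lm → ℕ × ℕ → Lm → Prop
  | refl (t : Lm) : RedCntN t (0, 0) t
  | db {t t₁ u : Lm} {b e : ℕ} :
      StepN .dB t t₁ → RedCntN t₁ (b, e) u → RedCntN t (b + 1, e) u
  | s {t t₁ u : Lm} {b e : ℕ} :
      StepN .s t t₁ → RedCntN t₁ (b, e) u → RedCntN t (b, e + 1) u

/-- counted CBV reduction, recording the number of dB- and sv-steps -/
inductive RedCntV : Lm → ℕ × ℕ → Lm → Prop
  | refl (t : Lm) : RedCntV t (0, 0) t
  | db {t t₁ u : Lm} {b e : ℕ} :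
      StepV .dB t t₁ → RedCntV t₁ (b, e) u → RedCntV t (b + 1, e) u
  | sv {t t₁ u : Lm} {b e : ℕ} :
      StepV .sv t t₁ → RedCntV t₁ (b, e) u → RedCntV t (b, e + 1) u

/-- the CBN embedding into the λ!-calculus -/
def cbn : Lm → Tm
  | .var k => .var k
  | .lam t => .lam (cbn t)
  | .app t u => .app (cbn t) (.bang (cbn u))
  | .esub t u => .esub (cbn t) (.bang (cbn u))

/-- `deBang t = some s'` iff `t = L⟨!s⟩` and `s' = L⟨s⟩` -/
def deBang : Tm → Option Tm
  | .bang s => some s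
  | .esub t e => (deBang t).map (fun s => Tm.esub s e)
  | _ => none

/-- the CBV embedding into the λ!-calculus -/
def cbv : Lm → Tm
  | .var k => .bang (.var k)
  | .lam t => .bang (.lam (cbv t))
  | .app t u =>
      match deBang (cbv t) with
      | some r => Tm.app r (cbv u)
      | none => Tm.app (.der (cbv t)) (cbv u)
  | .esub t u => .esub (cbv t) (cbv u)

/-- Sized typing of system 𝒩 (call-by-name): `DerN Γ t τ n` means that there
is a derivation of `Γ ⊢ t : τ` of size `n` (counting all rules). -/
inductive DerN : Ctx → Lm → Ty → ℕ → Prop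
  | ax (k : ℕ) (σ : Ty) : DerN (Ctx.single k {σ}) (Lm.var k) σ 1
  | app {Γ : Ctx} {t u : Lm} {τ : Ty} {n : ℕ} (prs : List (Ctx × Ty × ℕ)) :
      DerN Γ t (Ty.arr (prs.map (·.2.1)) τ) n →
      (∀ p ∈ prs, DerN p.1 u p.2.1 p.2.2) →
      DerN (Γ + (prs.map (·.1)).sum) (Lm.app t u) τ
           (n + (prs.map (·.2.2)).sum + 1)
  | abs {Γ : Ctx} {t : Lm} {τ : Ty} {n : ℕ} (M : List Ty) :
      DerN Γ t τ n → Multiset.ofList M = Γ 0 →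
      DerN (Ctx.tail Γ) (Lm.lam t) (Ty.arr M τ) (n + 1)
  | es {Γ : Ctx} {t u : Lm} {τ : Ty} {n : ℕ} (prs : List (Ctx × Ty × ℕ)) :
      DerN Γ t τ n →
      Multiset.ofList (prs.map (·.2.1)) = Γ 0 →
      (∀ p ∈ prs, DerN p.1 u p.2.1 p.2.2) →
      DerN (Ctx.tail Γ + (prs.map (·.1)).sum) (Lm.esub t u) τ
           (n + (prs.map (·.2.2)).sum + 1)

/-- Sized typing of system 𝒱 (call-by-value): `DerV Γ t τ n` means that there
is a derivation of `Γ ⊢ t : τ` of size `n` (each rule counts 1, except that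
`ax` counts the cardinal of its multiset and `abs` contributes the sizes of
its premises plus the number of premises). -/
inductive DerV : Ctx → Lm → Ty → ℕ → Prop
  | ax (k : ℕ) (M : List Ty) :
      DerV (Ctx.single k (Multiset.ofList M)) (Lm.var k) (Ty.mult M) M.length
  | es {Γ Δ : Ctx} {t u : Lm} {σ : Ty} {M : List Ty} {n m : ℕ} :
      DerV Γ t σ n → DerV Δ u (Ty.mult M) m → Multiset.ofList M = Γ 0 →
      DerV (Ctx.tail Γ + Δ) (Lm.esub t u) σ (n + m + 1)
  | abs {t : Lm} (prs : List (Ctx × List Ty × Ty × ℕ)) :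
      (∀ p ∈ prs, DerV p.1 t p.2.2.1 p.2.2.2) →
      (∀ p ∈ prs, Multiset.ofList p.2.1 = p.1 0) →
      DerV ((prs.map (fun p => Ctx.tail p.1)).sum) (Lm.lam t)
           (Ty.mult (prs.map (fun p => Ty.arr p.2.1 p.2.2.1)))
           ((prs.map (·.2.2.2)).sum + prs.length)
  | app {Γ Δ : Ctx} {t u : Lm} {M : List Ty} {τ : Ty} {n m : ℕ} :
      DerV Γ t (Ty.mult [Ty.arr M τ]) n → DerV Δ u (Ty.mult M) m →
      DerV (Γ + Δ) (Lm.app t u) τ (n + m + 1)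


/-! ## Auxiliary material for the substitution lemma -/

namespace SubstAux

open Tm

attribute [local instance] Classical.propDecidable

theorem liftR_congr {f g : ℕ → ℕ} (h : ∀ k, f k = g k) :
    ∀ k, Tm.liftR f k = Tm.liftR g k
  | 0 => rfl
  | k + 1 => by simp [Tm.liftR, h k]

theorem rename_congr : ∀ (t : Tm) {f g : ℕ → ℕ}, (∀ k, f k = g k) →
    Tm.rename f t = Tm.rename g t
  | .var k, _, _, h => by simp [Tm.rename, h k]
  | .app a b, _, _, h => by
      simp [Tm.rename, rename_congr a h, rename_congr b h]
  | .lam a, _, _, h => by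
      simp [Tm.rename, rename_congr a (liftR_congr h)]
  | .bang a, _, _, h => by simp [Tm.rename, rename_congr a h]
  | .der a, _, _, h => by simp [Tm.rename, rename_congr a h]
  | .esub a b, _, _, h => by
      simp [Tm.rename, rename_congr a (liftR_congr h), rename_congr b h]

theorem liftR_comp (f g : ℕ → ℕ) :
    ∀ k, Tm.liftR f (Tm.liftR g k) = Tm.liftR (fun k => f (g k)) k
  | 0 => rfl
  | _ + 1 => rfl

theorem rename_comp : ∀ (t : Tm) (f g : ℕ → ℕ),
    Tm.rename f (Tm.rename g t) = Tm.rename (fun k => f (g k)) t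
  | .var k, _, _ => rfl
  | .app a b, f, g => by simp [Tm.rename, rename_comp a f g, rename_comp b f g]
  | .lam a, f, g => by
      simp only [Tm.rename, rename_comp a (Tm.liftR f) (Tm.liftR g)]
      exact congrArg Tm.lam (rename_congr a (liftR_comp f g))
  | .bang a, f, g => by simp [Tm.rename, rename_comp a f g]
  | .der a, f, g => by simp [Tm.rename, rename_comp a f g]
  | .esub a b, f, g => by
      simp only [Tm.rename, rename_comp a (Tm.liftR f) (Tm.liftR g),
        rename_comp b f g]
      exact congrArg (fun s => Tm.esub s (Tm.rename (fun k => f (g k)) b))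
        (rename_congr a (liftR_comp f g))

theorem rename_id : ∀ (t : Tm) {f : ℕ → ℕ}, (∀ k, f k = k) → Tm.rename f t = t
  | .var k, _, h => by simp [Tm.rename, h k]
  | .app a b, _, h => by simp [Tm.rename, rename_id a h, rename_id b h]
  | .lam a, f, h => by
      have h' : ∀ k, Tm.liftR f k = k := fun k => (liftR_congr h k).trans
        (by cases k <;> rfl)
      simp [Tm.rename, rename_id a h']
  | .bang a, _, h => by simp [Tm.rename, rename_id a h]
  | .der a, _, h => by simp [Tm.rename, rename_id a h]
  | .esub a b, f, h => by
      have h' : ∀ k, Tm.liftR f k = k := fun k => (liftR_congr h k).trans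
        (by cases k <;> rfl)
      simp [Tm.rename, rename_id a h', rename_id b h]

theorem liftS_congr {σ σ' : ℕ → Tm} (h : ∀ k, σ k = σ' k) :
    ∀ k, Tm.liftS σ k = Tm.liftS σ' k
  | 0 => rfl
  | k + 1 => by simp [Tm.liftS, h k]

theorem subst_congr : ∀ (t : Tm) {σ σ' : ℕ → Tm}, (∀ k, σ k = σ' k) →
    Tm.subst σ t = Tm.subst σ' t
  | .var k, _, _, h => h k
  | .app a b, _, _, h => by simp [Tm.subst, subst_congr a h, subst_congr b h]
  | .lam a, _, _, h => by simp [Tm.subst, subst_congr a (liftS_congr h)]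
  | .bang a, _, _, h => by simp [Tm.subst, subst_congr a h]
  | .der a, _, _, h => by simp [Tm.subst, subst_congr a h]
  | .esub a b, _, _, h => by
      simp [Tm.subst, subst_congr a (liftS_congr h), subst_congr b h]

/-- reindexing a context along an injective renaming -/
noncomputable def pushCtx (f : ℕ → ℕ) (Γ : Ctx) : Ctx := fun j =>
  if h : ∃ k, f k = j then Γ h.choose else 0

theorem pushCtx_apply {f : ℕ → ℕ} (hf : Function.Injective f) (Γ : Ctx)
    (k : ℕ) : pushCtx f Γ (f k) = Γ k := by
  have h : ∃ i, f i = f k := ⟨k, rfl⟩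
  show (if h : ∃ i, f i = f k then Γ h.choose else 0) = Γ k
  rw [dif_pos h, hf h.choose_spec]

theorem pushCtx_not {f : ℕ → ℕ} {j : ℕ} (h : ∀ k, f k ≠ j) (Γ : Ctx) :
    pushCtx f Γ j = 0 := by
  show (if h : ∃ i, f i = j then Γ h.choose else 0) = 0
  rw [dif_neg]
  rintro ⟨k, hk⟩
  exact h k hk

theorem pushCtx_add (f : ℕ → ℕ) (Γ Δ : Ctx) :
    pushCtx f (Γ + Δ) = pushCtx f Γ + pushCtx f Δ := by
  funext j
  show (if h : ∃ i, f i = j then (Γ + Δ) h.choose else 0)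
      = (if h : ∃ i, f i = j then Γ h.choose else 0)
        + (if h : ∃ i, f i = j then Δ h.choose else 0)
  by_cases h : ∃ i, f i = j
  · rw [dif_pos h, dif_pos h, dif_pos h]; rfl
  · rw [dif_neg h, dif_neg h, dif_neg h]; simp

theorem pushCtx_zero (f : ℕ → ℕ) : pushCtx f (0 : Ctx) = 0 := by
  funext j
  show (if h : ∃ i, f i = j then (0 : Ctx) h.choose else 0) = 0
  by_cases h : ∃ i, f i = j
  · rw [dif_pos h]; rfl
  · rw [dif_neg h]

theorem pushCtx_sum (f : ℕ → ℕ) : ∀ (l : List Ctx),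
    pushCtx f l.sum = (l.map (pushCtx f)).sum
  | [] => by simp [pushCtx_zero]
  | Γ :: l => by simp [pushCtx_add, pushCtx_sum f l]

theorem pushCtx_single {f : ℕ → ℕ} (hf : Function.Injective f) (k : ℕ)
    (M : Multiset Ty) : pushCtx f (Ctx.single k M) = Ctx.single (f k) M := by
  funext j
  by_cases h : ∃ i, f i = j
  · obtain ⟨i, rfl⟩ := h
    rw [pushCtx_apply hf]
    show (if i = k then M else 0) = if f i = f k then M else 0
    simp [hf.eq_iff]
  · push_neg at h
    rw [pushCtx_not h]
    show (0 : Multiset Ty) = if j = f k then M else 0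
    rw [if_neg fun hj => h k hj.symm]

theorem liftR_inj {f : ℕ → ℕ} (hf : Function.Injective f) :
    Function.Injective (Tm.liftR f) := by
  intro a b hab
  cases a with
  | zero => cases b with
    | zero => rfl
    | succ b => simp [Tm.liftR] at hab
  | succ a => cases b with
    | zero => simp [Tm.liftR] at hab
    | succ b =>
        simp only [Tm.liftR, Nat.add_right_cancel_iff] at hab
        rw [hf hab]

theorem tail_pushCtx {f : ℕ → ℕ} (hf : Function.Injective f) (Γ : Ctx) :
    Ctx.tail (pushCtx (Tm.liftR f) Γ) = pushCtx f (Ctx.tail Γ) := by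
  funext k
  show pushCtx (Tm.liftR f) Γ (k + 1) = pushCtx f (Ctx.tail Γ) k
  by_cases h : ∃ i, f i = k
  · obtain ⟨i, rfl⟩ := h
    have h1 : Tm.liftR f (i + 1) = f i + 1 := rfl
    rw [← h1, pushCtx_apply (liftR_inj hf), pushCtx_apply hf]
    rfl
  · push_neg at h
    rw [pushCtx_not h, pushCtx_not]
    intro i
    cases i with
    | zero => simp [Tm.liftR]
    | succ i =>
        show f i + 1 ≠ k + 1
        intro hc
        exact h i (Nat.succ_injective hc)

theorem pushCtx_liftR_zero (f : ℕ → ℕ) (Γ : Ctx) :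
    pushCtx (Tm.liftR f) Γ 0 = Γ 0 := by
  have h : ∃ i, Tm.liftR f i = 0 := ⟨0, rfl⟩
  show (if h : ∃ i, Tm.liftR f i = 0 then Γ h.choose else 0) = Γ 0
  rw [dif_pos h]
  have hs := h.choose_spec
  rcases hc : h.choose with _ | i
  · rfl
  · rw [hc] at hs
    exact absurd hs (by show f i + 1 ≠ 0; simp)

/-- renaming preserves typing (and sizes) -/
theorem renameDer {Γ : Ctx} {t : Tm} {τ : Ty} {n : ℕ} (ht : DerU Γ t τ n) :
    ∀ (f : ℕ → ℕ), Function.Injective f →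
      DerU (pushCtx f Γ) (Tm.rename f t) τ n := by
  induction ht with
  | ax k σ =>
      intro f hf
      rw [pushCtx_single hf]
      exact DerU.ax (f k) σ
  | app h1 h2 ih1 ih2 =>
      intro f hf
      rw [pushCtx_add]
      exact DerU.app (ih1 f hf) (ih2 f hf)
  | abs M h hM ih =>
      intro f hf
      have d := DerU.abs M (ih (Tm.liftR f) (liftR_inj hf))
        (hM.trans (pushCtx_liftR_zero f _).symm)
      rwa [tail_pushCtx hf] at d
  | es h1 h2 hM ih1 ih2 =>
      intro f hf
      have d := DerU.es (ih1 (Tm.liftR f) (liftR_inj hf)) (ih2 f hf)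
        (hM.trans (pushCtx_liftR_zero f _).symm)
      rwa [tail_pushCtx hf, ← pushCtx_add] at d
  | bg prs h ih =>
      intro f hf
      have d := DerU.bg (prs.map (fun p => (pushCtx f p.1, p.2)))
        (by
          intro p hp
          obtain ⟨q, hq, rfl⟩ := List.mem_map.mp hp
          exact ih q hq f hf)
      simp only [List.map_map] at d
      have hctx : (prs.map ((·.1) ∘ fun p => (pushCtx f p.1, p.2))).sum
          = pushCtx f ((prs.map (·.1)).sum) := by
        rw [pushCtx_sum, List.map_map]
        rfl
      rw [hctx] at d
      have hty : prs.map ((·.2.1) ∘ fun p => (pushCtx f p.1, p.2))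
          = prs.map (·.2.1) := rfl
      have hsz : prs.map ((·.2.2) ∘ fun p => (pushCtx f p.1, p.2))
          = prs.map (·.2.2) := rfl
      rw [hty, hsz] at d
      exact d
  | dr h ih =>
      intro f hf
      exact DerU.dr (ih f hf)

/-- removing the `j`-th entry from a context -/
def delCtx (j : ℕ) (Γ : Ctx) : Ctx := fun k => if k < j then Γ k else Γ (k + 1)

theorem delCtx_add (j : ℕ) (Γ Δ : Ctx) :
    delCtx j (Γ + Δ) = delCtx j Γ + delCtx j Δ := by
  funext k
  show (if k < j then (Γ + Δ) k else (Γ + Δ) (k + 1)) = _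
  by_cases h : k < j <;> simp [delCtx, h] <;> rfl

theorem delCtx_zero' (j : ℕ) : delCtx j (0 : Ctx) = 0 := by
  funext k
  by_cases h : k < j <;> simp [delCtx, h] <;> rfl

theorem tail_delCtx (j : ℕ) (Γ : Ctx) :
    Ctx.tail (delCtx (j + 1) Γ) = delCtx j (Ctx.tail Γ) := by
  funext k
  show (if k + 1 < j + 1 then Γ (k + 1) else Γ (k + 2))
      = (if k < j then Γ (k + 1) else Γ (k + 2))
  by_cases h : k < j
  · rw [if_pos (by omega), if_pos h]
  · rw [if_neg (by omega), if_neg h]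

theorem delCtx_at_zero (j : ℕ) (Γ : Ctx) : delCtx (j + 1) Γ 0 = Γ 0 := by
  simp [delCtx]

theorem delCtx_single_self (j : ℕ) (M : Multiset Ty) :
    delCtx j (Ctx.single j M) = 0 := by
  funext k
  show (if k < j then Ctx.single j M k else Ctx.single j M (k + 1)) = 0
  by_cases h : k < j
  · rw [if_pos h]
    show (if k = j then M else 0) = 0
    rw [if_neg (by omega)]
  · rw [if_neg h]
    show (if k + 1 = j then M else 0) = 0
    rw [if_neg (by omega)]

theorem delCtx_single_lt {k j : ℕ} (h : k < j) (M : Multiset Ty) :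
    delCtx j (Ctx.single k M) = Ctx.single k M := by
  funext i
  show (if i < j then Ctx.single k M i else Ctx.single k M (i + 1))
      = Ctx.single k M i
  by_cases hi : i < j
  · rw [if_pos hi]
  · rw [if_neg hi]
    show (if i + 1 = k then M else 0) = if i = k then M else 0
    rw [if_neg (by omega), if_neg (by omega)]

theorem delCtx_single_gt {k j : ℕ} (h : j < k) (M : Multiset Ty) :
    delCtx j (Ctx.single k M) = Ctx.single (k - 1) M := by
  funext i
  show (if i < j then Ctx.single k M i else Ctx.single k M (i + 1))
      = Ctx.single (k - 1) M i
  by_cases hi : i < j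
  · rw [if_pos hi]
    show (if i = k then M else 0) = if i = k - 1 then M else 0
    rw [if_neg (by omega), if_neg (by omega)]
  · rw [if_neg hi]
    show (if i + 1 = k then M else 0) = if i = k - 1 then M else 0
    by_cases he : i + 1 = k
    · rw [if_pos he, if_pos (by omega)]
    · rw [if_neg he, if_neg (by omega)]

theorem addj_inj (j : ℕ) : Function.Injective (· + j) :=
  fun a b h => Nat.add_right_cancel h

theorem tail_pushCtx_addj (j : ℕ) (Δ : Ctx) :
    Ctx.tail (pushCtx (· + (j + 1)) Δ) = pushCtx (· + j) Δ := by
  funext k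
  show pushCtx (· + (j + 1)) Δ (k + 1) = pushCtx (· + j) Δ k
  by_cases h : ∃ i, i + j = k
  · obtain ⟨i, rfl⟩ := h
    have h1 : i + j + 1 = i + (j + 1) := rfl
    rw [h1, pushCtx_apply (addj_inj (j + 1)), pushCtx_apply (addj_inj j)]
  · push_neg at h
    rw [pushCtx_not (fun i hi => h i (by omega : i + j = k)),
      pushCtx_not (fun i hi => h i hi)]

theorem pushCtx_addj_zero (j : ℕ) (Δ : Ctx) :
    pushCtx (· + (j + 1)) Δ 0 = 0 :=
  pushCtx_not (fun i => by omega) Δ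

theorem pushCtx_add_zero (Δ : Ctx) : pushCtx (· + 0) Δ = Δ := by
  funext k
  exact pushCtx_apply (addj_inj 0) Δ k

theorem tail_add (Γ Δ : Ctx) :
    Ctx.tail (Γ + Δ) = Ctx.tail Γ + Ctx.tail Δ := rfl

theorem tail_sum : ∀ (l : List Ctx),
    Ctx.tail l.sum = (l.map Ctx.tail).sum
  | [] => rfl
  | Γ :: l => by
      simp only [List.sum_cons, List.map_cons, tail_add, tail_sum l]

/-- the substitution function replacing variable `j` by `u` -/
def sigSub (j : ℕ) (u : Tm) : ℕ → Tm := fun k =>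
  if k < j then .var k else if k = j then .rename (· + j) u else .var (k - 1)

theorem liftS_sigSub (j : ℕ) (u : Tm) :
    ∀ k, Tm.liftS (sigSub j u) k = sigSub (j + 1) u k
  | 0 => by simp [Tm.liftS, sigSub]
  | k + 1 => by
      show Tm.rename (· + 1) (sigSub j u k) = sigSub (j + 1) u (k + 1)
      rcases Nat.lt_trichotomy k j with h | h | h
      · simp only [sigSub, if_pos h, if_pos (by omega : k + 1 < j + 1)]
        rfl
      · subst h
        simp only [sigSub, if_neg (by omega : ¬ k < k), if_pos rfl,
          if_neg (by omega : ¬ k + 1 < k + 1), if_true, ite_true]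
        rw [rename_comp]
        exact rename_congr u (fun i => rfl)
      · simp only [sigSub, if_neg (by omega : ¬ k < j),
          if_neg (by omega : ¬ k = j), if_neg (by omega : ¬ k + 1 < j + 1),
          if_neg (by omega : ¬ k + 1 = j + 1)]
        show Tm.var (k - 1 + 1) = Tm.var (k + 1 - 1)
        congr 1
        omega

theorem subst0_eq (u t : Tm) : Tm.subst0 u t = Tm.subst (sigSub 0 u) t := by
  apply subst_congr
  intro k
  cases k with
  | zero =>
      show u = sigSub 0 u 0
      simp only [sigSub, if_neg (by omega : ¬ (0:ℕ) < 0), if_pos rfl]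
      exact (rename_id u (fun k => rfl)).symm
  | succ k =>
      show Tm.var (k + 0) = sigSub 0 u (k + 1)
      simp [sigSub]

/-- splitting a list along a decomposition of the multiset of its images -/
theorem split_list {α β : Type*} (g : α → β) :
    ∀ (l : List α) (A B : Multiset β),
      Multiset.ofList (l.map g) = A + B →
      ∃ l₁ l₂ : List α, l.Perm (l₁ ++ l₂) ∧
        Multiset.ofList (l₁.map g) = A ∧ Multiset.ofList (l₂.map g) = B
  | [], A, B, h => by
      have h0 : A + B = 0 := h.symm
      have hA : A = 0 := Multiset.le_zero.mp (h0 ▸ Multiset.le_add_right A B)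
      have hB : B = 0 := Multiset.le_zero.mp (h0 ▸ Multiset.le_add_left B A)
      exact ⟨[], [], List.Perm.refl _, by simp [hA], by simp [hB]⟩
  | p :: l, A, B, h => by
      have hmem : g p ∈ A + B := by
        rw [← h]
        exact Multiset.mem_coe.mpr (by simp)
      rcases Multiset.mem_add.mp hmem with hA | hB
      · obtain ⟨A', rfl⟩ := Multiset.exists_cons_of_mem hA
        have h' : Multiset.ofList (l.map g) = A' + B := by
          have : (g p ::ₘ Multiset.ofList (l.map g))
              = g p ::ₘ (A' + B) := by
            rw [← Multiset.cons_add]; exact h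
          exact (Multiset.cons_inj_right _).mp this
        obtain ⟨l₁, l₂, hperm, h₁, h₂⟩ := split_list g l A' B h'
        exact ⟨p :: l₁, l₂, hperm.cons p, by
          show (g p ::ₘ Multiset.ofList (l₁.map g)) = g p ::ₘ A'
          rw [h₁], h₂⟩
      · obtain ⟨B', rfl⟩ := Multiset.exists_cons_of_mem hB
        have h' : Multiset.ofList (l.map g) = A + B' := by
          have : (g p ::ₘ Multiset.ofList (l.map g))
              = g p ::ₘ (A + B') := by
            rw [← Multiset.add_cons]
            exact h
          exact (Multiset.cons_inj_right _).mp this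
        obtain ⟨l₁, l₂, hperm, h₁, h₂⟩ := split_list g l A B' h'
        refine ⟨l₁, p :: l₂, ?_, h₁, by
          show (g p ::ₘ Multiset.ofList (l₂.map g)) = g p ::ₘ B'
          rw [h₂]⟩
        exact (hperm.cons p).trans List.perm_middle.symm


theorem substG {Γ : Ctx} {t : Tm} {τ : Ty} {n : ℕ} (ht : DerU Γ t τ n) :
    ∀ (u : Tm) (j : ℕ) (prs : List (Ctx × Ty × ℕ)),
      Γ j = Multiset.ofList (prs.map (fun p : Ctx × Ty × ℕ => p.2.1)) →
      (∀ p ∈ prs, DerU p.1 u p.2.1 p.2.2) →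
      ∃ m, DerU (delCtx j Γ + (prs.map (fun p => pushCtx (· + j) p.1)).sum)
          (Tm.subst (sigSub j u) t) τ m ∧
        m + prs.length = n + (prs.map (fun p : Ctx × Ty × ℕ => p.2.2)).sum := by
  induction ht with
  | ax k σ =>
      intro u j prs hx hu
      by_cases hjk : j = k
      · subst hjk
        have hm : prs.map (fun p : Ctx × Ty × ℕ => p.2.1) = [σ] := Multiset.coe_eq_singleton.mp
          (by rw [← hx]; simp [Ctx.single])
        cases prs with
        | nil => simp at hm
        | cons p l =>
          simp only [List.map_cons, List.cons.injEq] at hm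
          obtain ⟨hpσ, hl⟩ := hm
          cases l with
          | cons q l' => simp at hl
          | nil =>
            have d := renameDer (hu p List.mem_cons_self)
              (· + j) (addj_inj j)
            rw [hpσ] at d
            refine ⟨p.2.2, ?_, by simp [Nat.add_comm]⟩
            have hterm : Tm.subst (sigSub j u) (Tm.var j)
                = Tm.rename (· + j) u := by
              show sigSub j u j = _
              simp [sigSub]
            have hctx : delCtx j (Ctx.single j {σ})
                + (([p] : List (Ctx × Ty × ℕ)).map
                    (fun p => pushCtx (· + j) p.1)).sum
                = pushCtx (· + j) p.1 := by
              rw [delCtx_single_self]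
              simp
            rw [hterm, hctx]
            exact d
      · have h0 : Multiset.ofList (prs.map (fun p : Ctx × Ty × ℕ => p.2.1)) = 0 := by
          rw [← hx]
          show Ctx.single k {σ} j = 0
          simp [Ctx.single, hjk]
        cases prs with
        | cons p l => simp at h0
        | nil =>
          simp only [List.map_nil, List.sum_nil, add_zero, List.length_nil]
          rcases Nat.lt_or_ge k j with hk | hk
          · refine ⟨1, ?_, rfl⟩
            have hterm : Tm.subst (sigSub j u) (Tm.var k) = Tm.var k := by
              show sigSub j u k = _
              simp [sigSub, hk]
            rw [hterm, delCtx_single_lt hk]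
            exact DerU.ax k σ
          · have hk' : j < k := by omega
            refine ⟨1, ?_, rfl⟩
            have hterm : Tm.subst (sigSub j u) (Tm.var k)
                = Tm.var (k - 1) := by
              show sigSub j u k = _
              rw [sigSub]
              rw [if_neg (by omega), if_neg (by omega)]
            rw [hterm, delCtx_single_gt hk']
            exact DerU.ax (k - 1) σ
  | @app G D tt uu M τ' n1 n2 h1 h2 ih1 ih2 =>
      intro u j prs hx hu
      have hx' : Multiset.ofList (prs.map (fun p : Ctx × Ty × ℕ => p.2.1)) = G j + D j := by
        rw [← hx]; rfl
      obtain ⟨l₁, l₂, hperm, hA, hB⟩ := split_list (fun p : Ctx × Ty × ℕ => p.2.1) prs (G j) (D j) hx'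
      obtain ⟨m₁, d₁, e₁⟩ := ih1 u j l₁ hA.symm
        (fun p hp => hu p (hperm.mem_iff.mpr (List.mem_append_left _ hp)))
      obtain ⟨m₂, d₂, e₂⟩ := ih2 u j l₂ hB.symm
        (fun p hp => hu p (hperm.mem_iff.mpr (List.mem_append_right _ hp)))
      have hsum : (prs.map (fun p => pushCtx (· + j) p.1)).sum
          = (l₁.map (fun p => pushCtx (· + j) p.1)).sum
            + (l₂.map (fun p => pushCtx (· + j) p.1)).sum := by
        rw [(hperm.map (fun p => pushCtx (· + j) p.1)).sum_eq,
          List.map_append, List.sum_append]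
      have hsz : (prs.map (fun p : Ctx × Ty × ℕ => p.2.2)).sum
          = (l₁.map (fun p : Ctx × Ty × ℕ => p.2.2)).sum + (l₂.map (fun p : Ctx × Ty × ℕ => p.2.2)).sum := by
        rw [(hperm.map (fun p : Ctx × Ty × ℕ => p.2.2)).sum_eq, List.map_append, List.sum_append]
      have hlen : prs.length = l₁.length + l₂.length := by
        rw [hperm.length_eq, List.length_append]
      refine ⟨m₁ + m₂ + 1, ?_, by rw [hsz, hlen]; omega⟩
      have d := DerU.app d₁ d₂
      have hctx : (delCtx j G + (l₁.map (fun p => pushCtx (· + j) p.1)).sum)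
          + (delCtx j D + (l₂.map (fun p => pushCtx (· + j) p.1)).sum)
          = delCtx j (G + D) + (prs.map (fun p => pushCtx (· + j) p.1)).sum := by
        rw [delCtx_add, hsum, add_add_add_comm]
      rw [← hctx]
      exact d
  | @abs G tt τ' n1 M h hM ih =>
      intro u j prs hx hu
      obtain ⟨m, d, e⟩ := ih u (j + 1) prs hx hu
      have hzero : (prs.map (fun p => pushCtx (· + (j + 1)) p.1)).sum 0 = 0 := by
        rw [Pi.list_sum_apply]
        apply List.sum_eq_zero
        intro x hxm
        simp only [List.map_map, List.mem_map] at hxm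
        obtain ⟨p, hp, rfl⟩ := hxm
        exact pushCtx_addj_zero j p.1
      have hM' : Multiset.ofList M = (delCtx (j + 1) G
          + (prs.map (fun p => pushCtx (· + (j + 1)) p.1)).sum) 0 := by
        show Multiset.ofList M = delCtx (j + 1) G 0 + _
        rw [delCtx_at_zero, hzero, add_zero]
        exact hM
      have d2 := DerU.abs M d hM'
      refine ⟨m + 1, ?_, by omega⟩
      have hctx : Ctx.tail (delCtx (j + 1) G
            + (prs.map (fun p => pushCtx (· + (j + 1)) p.1)).sum)
          = delCtx j (Ctx.tail G)
            + (prs.map (fun p => pushCtx (· + j) p.1)).sum := by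
        rw [tail_add, tail_delCtx, tail_sum, List.map_map]
        exact congrArg (delCtx j (Ctx.tail G) + List.sum ·)
          (List.map_congr_left
            (fun (p : Ctx × Ty × ℕ) _ => tail_pushCtx_addj j p.1))
      have hterm : Tm.subst (sigSub j u) (Tm.lam tt)
          = Tm.lam (Tm.subst (sigSub (j + 1) u) tt) :=
        congrArg Tm.lam (subst_congr tt (liftS_sigSub j u))
      rw [hterm, ← hctx]
      exact d2
  | @es G D tt uu σ' M n1 n2 h1 h2 hM ih1 ih2 =>
      intro u j prs hx hu
      have hx' : Multiset.ofList (prs.map (fun p : Ctx × Ty × ℕ => p.2.1)) = G (j + 1) + D j := by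
        rw [← hx]; rfl
      obtain ⟨l₁, l₂, hperm, hA, hB⟩ :=
        split_list (fun p : Ctx × Ty × ℕ => p.2.1) prs (G (j + 1)) (D j) hx'
      obtain ⟨m₁, d₁, e₁⟩ := ih1 u (j + 1) l₁ hA.symm
        (fun p hp => hu p (hperm.mem_iff.mpr (List.mem_append_left _ hp)))
      obtain ⟨m₂, d₂, e₂⟩ := ih2 u j l₂ hB.symm
        (fun p hp => hu p (hperm.mem_iff.mpr (List.mem_append_right _ hp)))
      have hzero : (l₁.map (fun p => pushCtx (· + (j + 1)) p.1)).sum 0 = 0 := by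
        rw [Pi.list_sum_apply]
        apply List.sum_eq_zero
        intro x hxm
        simp only [List.map_map, List.mem_map] at hxm
        obtain ⟨p, hp, rfl⟩ := hxm
        exact pushCtx_addj_zero j p.1
      have hM' : Multiset.ofList M = (delCtx (j + 1) G
          + (l₁.map (fun p => pushCtx (· + (j + 1)) p.1)).sum) 0 := by
        show Multiset.ofList M = delCtx (j + 1) G 0 + _
        rw [delCtx_at_zero, hzero, add_zero]
        exact hM
      have d := DerU.es d₁ d₂ hM'
      have hsum : (prs.map (fun p => pushCtx (· + j) p.1)).sum
          = (l₁.map (fun p => pushCtx (· + j) p.1)).sum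
            + (l₂.map (fun p => pushCtx (· + j) p.1)).sum := by
        rw [(hperm.map (fun p => pushCtx (· + j) p.1)).sum_eq,
          List.map_append, List.sum_append]
      have hsz : (prs.map (fun p : Ctx × Ty × ℕ => p.2.2)).sum
          = (l₁.map (fun p : Ctx × Ty × ℕ => p.2.2)).sum + (l₂.map (fun p : Ctx × Ty × ℕ => p.2.2)).sum := by
        rw [(hperm.map (fun p : Ctx × Ty × ℕ => p.2.2)).sum_eq, List.map_append, List.sum_append]
      have hlen : prs.length = l₁.length + l₂.length := by
        rw [hperm.length_eq, List.length_append]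
      refine ⟨m₁ + m₂ + 1, ?_, by rw [hsz, hlen]; omega⟩
      have htl : Ctx.tail (delCtx (j + 1) G
            + (l₁.map (fun p => pushCtx (· + (j + 1)) p.1)).sum)
          = delCtx j (Ctx.tail G)
            + (l₁.map (fun p => pushCtx (· + j) p.1)).sum := by
        rw [tail_add, tail_delCtx, tail_sum, List.map_map]
        exact congrArg (delCtx j (Ctx.tail G) + List.sum ·)
          (List.map_congr_left
            (fun (p : Ctx × Ty × ℕ) _ => tail_pushCtx_addj j p.1))
      have hctx : Ctx.tail (delCtx (j + 1) G
            + (l₁.map (fun p => pushCtx (· + (j + 1)) p.1)).sum)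
          + (delCtx j D + (l₂.map (fun p => pushCtx (· + j) p.1)).sum)
          = delCtx j (Ctx.tail G + D)
            + (prs.map (fun p => pushCtx (· + j) p.1)).sum := by
        rw [htl, delCtx_add, hsum, add_add_add_comm]
      have hterm : Tm.subst (sigSub j u) (Tm.esub tt uu)
          = Tm.esub (Tm.subst (sigSub (j + 1) u) tt)
              (Tm.subst (sigSub j u) uu) := by
        show Tm.esub (Tm.subst (Tm.liftS (sigSub j u)) tt) _ = _
        rw [subst_congr tt (liftS_sigSub j u)]
      rw [hterm, ← hctx]
      exact d
  | @bg tt prs₀ h ih =>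
      intro u j prs hx hu
      have key : ∀ (l : List (Ctx × Ty × ℕ)), (∀ p ∈ l, p ∈ prs₀) →
          ∀ (prs' : List (Ctx × Ty × ℕ)),
            ((l.map (fun p : Ctx × Ty × ℕ => p.1)).sum) j = Multiset.ofList (prs'.map (fun p : Ctx × Ty × ℕ => p.2.1)) →
            (∀ q ∈ prs', DerU q.1 u q.2.1 q.2.2) →
            ∃ l' : List (Ctx × Ty × ℕ),
              (∀ q ∈ l', DerU q.1 (Tm.subst (sigSub j u) tt) q.2.1 q.2.2) ∧
              l'.map (fun p : Ctx × Ty × ℕ => p.2.1) = l.map (fun p : Ctx × Ty × ℕ => p.2.1) ∧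
              (l'.map (fun p : Ctx × Ty × ℕ => p.1)).sum = delCtx j ((l.map (fun p : Ctx × Ty × ℕ => p.1)).sum)
                + (prs'.map (fun p => pushCtx (· + j) p.1)).sum ∧
              (l'.map (fun p : Ctx × Ty × ℕ => p.2.2)).sum + prs'.length
                = (l.map (fun p : Ctx × Ty × ℕ => p.2.2)).sum + (prs'.map (fun p : Ctx × Ty × ℕ => p.2.2)).sum := by
        intro l
        induction l with
        | nil =>
            intro _ prs' hx' hu'
            have h0 : Multiset.ofList (prs'.map (fun p : Ctx × Ty × ℕ => p.2.1)) = 0 := by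
              rw [← hx']; rfl
            cases prs' with
            | cons q l'' => simp at h0
            | nil =>
                refine ⟨[], by simp, rfl, ?_, rfl⟩
                simp [delCtx_zero']
        | cons p l ihl =>
            intro hmem prs' hx' hu'
            have hx'' : Multiset.ofList (prs'.map (fun p : Ctx × Ty × ℕ => p.2.1))
                = p.1 j + ((l.map (fun p : Ctx × Ty × ℕ => p.1)).sum) j := by
              rw [← hx']; rfl
            obtain ⟨l₁, l₂, hperm, hA, hB⟩ :=
              split_list (fun p : Ctx × Ty × ℕ => p.2.1) prs' (p.1 j) _ hx''
            obtain ⟨m₁, d₁, e₁⟩ := ih p (hmem p List.mem_cons_self) u j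
              l₁ hA.symm
              (fun q hq => hu' q (hperm.mem_iff.mpr (List.mem_append_left _ hq)))
            obtain ⟨l', hd', hty', hctx', hsz'⟩ :=
              ihl (fun q hq => hmem q (List.mem_cons_of_mem p hq)) l₂ hB.symm
              (fun q hq => hu' q (hperm.mem_iff.mpr (List.mem_append_right _ hq)))
            have hsum : (prs'.map (fun p => pushCtx (· + j) p.1)).sum
                = (l₁.map (fun p => pushCtx (· + j) p.1)).sum
                  + (l₂.map (fun p => pushCtx (· + j) p.1)).sum := by
              rw [(hperm.map (fun p => pushCtx (· + j) p.1)).sum_eq,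
                List.map_append, List.sum_append]
            have hsz : (prs'.map (fun p : Ctx × Ty × ℕ => p.2.2)).sum
                = (l₁.map (fun p : Ctx × Ty × ℕ => p.2.2)).sum + (l₂.map (fun p : Ctx × Ty × ℕ => p.2.2)).sum := by
              rw [(hperm.map (fun p : Ctx × Ty × ℕ => p.2.2)).sum_eq, List.map_append, List.sum_append]
            have hlen : prs'.length = l₁.length + l₂.length := by
              rw [hperm.length_eq, List.length_append]
            refine ⟨(delCtx j p.1
                + (l₁.map (fun p => pushCtx (· + j) p.1)).sum, p.2.1, m₁) :: l',
              ?_, ?_, ?_, ?_⟩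
            · intro q hq
              rcases List.mem_cons.mp hq with rfl | hq
              · exact d₁
              · exact hd' q hq
            · simp only [List.map_cons, hty']
            · simp only [List.map_cons, List.sum_cons, hctx', hsum]
              rw [delCtx_add]
              exact add_add_add_comm _ _ _ _
            · simp only [List.map_cons, List.sum_cons]
              rw [hsz, hlen]
              omega
      obtain ⟨l', hd', hty', hctx', hsz'⟩ := key prs₀ (fun p hp => hp) prs hx hu
      refine ⟨(l'.map (fun p : Ctx × Ty × ℕ => p.2.2)).sum, ?_, hsz'⟩
      have d := DerU.bg l' hd'
      rw [hctx', hty'] at d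
      exact d
  | @dr G tt σ' n1 h1 ih1 =>
      intro u j prs hx hu
      obtain ⟨m, d, e⟩ := ih1 u j prs hx hu
      exact ⟨m + 1, DerU.dr d, by omega⟩

end SubstAux

/-- **Substitution lemma for system 𝒰** (Lemma 6): if
`Γ; x:[σᵢ]_{i∈I} ⊢ t : τ` with a derivation of size `n`, and for each `i ∈ I`
there is a derivation of `Δᵢ ⊢ u : σᵢ` of size `mᵢ`, then there is a
derivation of `Γ + Σᵢ Δᵢ ⊢ t{x:=u} : τ` of size `n + Σᵢ mᵢ − |I|`.
(The variable `x` is the de Bruijn index `0`; the family `(Δᵢ, σᵢ, mᵢ)_{i∈I}`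
is given by the list `prs`.) -/
theorem substitution {Γ : Ctx} {t u : Tm} {τ : Ty} {n : ℕ}
    (prs : List (Ctx × Ty × ℕ))
    (ht : DerU Γ t τ n)
    (hx : Γ 0 = Multiset.ofList (prs.map (·.2.1)))
    (hu : ∀ p ∈ prs, DerU p.1 u p.2.1 p.2.2) :
    ∃ m : ℕ,
      DerU (Ctx.tail Γ + (prs.map (·.1)).sum) (Tm.subst0 u t) τ m ∧
      m + prs.length = n + (prs.map (·.2.2)).sum := by
  obtain ⟨m, d, e⟩ := SubstAux.substG ht u 0 prs hx hu
  have h1 : SubstAux.delCtx 0 Γ = Ctx.tail Γ := by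
    funext k
    show (if k < 0 then Γ k else Γ (k + 1)) = Γ (k + 1)
    rw [if_neg (by omega)]
  have h2 : prs.map (fun p => SubstAux.pushCtx (· + 0) p.1) = prs.map (·.1) :=
    List.map_congr_left (fun p _ => SubstAux.pushCtx_add_zero p.1)
  rw [h1, h2, ← SubstAux.subst0_eq u t] at d
  exact ⟨m, d, e⟩
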